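/- arXiv:1108.4792 — 2 statements merged into one kernel-verified Lean document; each statement's English description precedes it below -/
import Mathlib

section
/- Let $l, m \ge 1$ and let $a_0, \dots, a_l$ and $b_0, \dots, b_m$ be positive real numbers, each sequence being log-concave, i.e. $a_j^2 \ge a_{j-1} a_{j+1}$ for $1 \le j \le l-1$ and $b_q^2 \ge b_{q-1} b_{q+1}$ for $1 \le q \le m-1$. Define, for $0 \le p \le l+m$, $d_p := \max\{ a_j b_{p-j} : \max(0, p-m) \le j \le \min(p, l) \}$. Then the multiset of consecutive ratios $\{ d_{p+1}/d_p : 0 \le p \le l+m-1 \}$ is equal to the multiset union of $\{ a_{j+1}/a_j : 0 \le j \le l-1 \}$ and $\{ b_{q+1}/b_q : 0 \le q \le m-1 \}$. -/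
open Classical in
/-- Greedy merge counter: `mergeC l m r s p` = number of `r`-ratios among the `p`
largest elements of the merge of the (non-increasing) sequences `r` (length `l`)
and `s` (length `m`), preferring `r` on ties. -/
noncomputable def mergeC (l m : ℕ) (r s : ℕ → ℝ) : ℕ → ℕ
  | 0 => 0
  | p + 1 =>
    if mergeC l m r s p < l ∧
        (m ≤ p - mergeC l m r s p ∨
          s (p - mergeC l m r s p) ≤ r (mergeC l m r s p)) then
      mergeC l m r s p + 1
    else mergeC l m r s p

/-- The multiset of consecutive ratios of the max-plus (tropical) convolution of two
positive log-concave sequences is the multiset union of the multisets of consecutive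
ratios of the two sequences. -/
theorem maxConv_ratio_multiset
    (l m : ℕ) (hl : 1 ≤ l) (hm : 1 ≤ m) (a b : ℕ → ℝ) (d : ℕ → ℝ)
    (hapos : ∀ j : ℕ, j ≤ l → 0 < a j)
    (hbpos : ∀ q : ℕ, q ≤ m → 0 < b q)
    (halc : ∀ j : ℕ, 1 ≤ j → j + 1 ≤ l → a (j - 1) * a (j + 1) ≤ a j ^ 2)
    (hblc : ∀ q : ℕ, 1 ≤ q → q + 1 ≤ m → b (q - 1) * b (q + 1) ≤ b q ^ 2)
    (hd : ∀ p : ℕ, (hp : p ≤ l + m) →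
      d p = (Finset.Icc (p - m) (min p l)).sup'
        (Finset.nonempty_Icc.mpr (by omega)) (fun j => a j * b (p - j))) :
    (Multiset.range (l + m)).map (fun p => d (p + 1) / d p)
      = (Multiset.range l).map (fun j => a (j + 1) / a j)
        + (Multiset.range m).map (fun q => b (q + 1) / b q) := by
  set r : ℕ → ℝ := fun j => a (j + 1) / a j with hr
  set s : ℕ → ℝ := fun q => b (q + 1) / b q with hs
  set c : ℕ → ℕ := mergeC l m r s with hc
  have hcsucc : ∀ p : ℕ, c (p + 1) =
      if c p < l ∧ (m ≤ p - c p ∨ s (p - c p) ≤ r (c p)) then c p + 1 else c p := by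
    intro p; rw [hc]; rw [mergeC]
  have hc0 : c 0 = 0 := by rw [hc]; rw [mergeC]
  -- stepwise monotonicity of ratios
  have rstep : ∀ i : ℕ, i + 2 ≤ l → r (i + 1) ≤ r i := by
    intro i hi
    have h := halc (i + 1) (by omega) (by omega)
    simp only [Nat.add_sub_cancel] at h
    have h0 : 0 < a i := hapos i (by omega)
    have h1 : 0 < a (i + 1) := hapos (i + 1) (by omega)
    rw [hr]
    rw [div_le_div_iff₀ (hapos (i + 1) (by omega)) h0]
    nlinarith
  have sstep : ∀ q : ℕ, q + 2 ≤ m → s (q + 1) ≤ s q := by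
    intro q hq
    have h := hblc (q + 1) (by omega) (by omega)
    simp only [Nat.add_sub_cancel] at h
    have h0 : 0 < b q := hbpos q (by omega)
    rw [hs]
    rw [div_le_div_iff₀ (hbpos (q + 1) (by omega)) h0]
    nlinarith
  have rmono : ∀ i i' : ℕ, i ≤ i' → i' < l → r i' ≤ r i := by
    intro i i' hii hil
    induction i' with
    | zero => interval_cases i; exact le_refl _
    | succ n ih =>
      rcases Nat.lt_or_ge i (n + 1) with h | h
      · exact le_trans (rstep n (by omega)) (ih (by omega) (by omega))
      · have : i = n + 1 := by omega
        subst this; exact le_refl _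
  have smono : ∀ q q' : ℕ, q ≤ q' → q' < m → s q' ≤ s q := by
    intro q q' hqq hqm
    induction q' with
    | zero => interval_cases q; exact le_refl _
    | succ n ih =>
      rcases Nat.lt_or_ge q (n + 1) with h | h
      · exact le_trans (sstep n (by omega)) (ih (by omega) (by omega))
      · have : q = n + 1 := by omega
        subst this; exact le_refl _
  -- the grand invariant
  have inv : ∀ p : ℕ, p ≤ l + m →
      c p ≤ l ∧ c p ≤ p ∧ p ≤ m + c p ∧
      (∀ i < c p, ∀ q : ℕ, p - c p ≤ q → q < m → s q ≤ r i) ∧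
      (∀ q < p - c p, ∀ i : ℕ, c p ≤ i → i < l → r i ≤ s q) := by
    intro p
    induction p with
    | zero => simp [hc0]
    | succ p ih =>
      intro hp
      obtain ⟨h1, h2, h3, hA, hB⟩ := ih (by omega)
      rw [hcsucc p]
      by_cases hcond : c p < l ∧ (m ≤ p - c p ∨ s (p - c p) ≤ r (c p))
      · rw [if_pos hcond]
        refine ⟨by omega, by omega, by omega, ?_, ?_⟩
        · intro i hi q hq1 hq2
          have hq1' : p - c p ≤ q := by omega
          rcases Nat.lt_or_ge i (c p) with h | h
          · exact hA i h q hq1' hq2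
          · have : i = c p := by omega
            subst this
            rcases hcond.2 with h' | h'
            · omega
            · exact le_trans (smono _ q hq1' hq2) h'
        · intro q hq i hi hil
          exact hB q (by omega) i (by omega) hil
      · rw [if_neg hcond]
        push_neg at hcond
        have h3' : p < m + c p := by
          rcases Nat.lt_or_ge (c p) l with h | h
          · have := (hcond h).1; omega
          · omega
        refine ⟨h1, by omega, by omega, ?_, ?_⟩
        · intro i hi q hq1 hq2
          exact hA i hi q (by omega) hq2
        · intro q hq i hi hil
          rcases Nat.lt_or_ge q (p - c p) with h | h
          · exact hB q h i hi hil
          · have : q = p - c p := by omega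
            subst this
            have hcl : c p < l := by omega
            exact le_trans (rmono (c p) i hi hil) (le_of_lt (hcond hcl).2)
  -- the maximum is attained at c p
  have maxle : ∀ p : ℕ, p ≤ l + m → ∀ j : ℕ, p - m ≤ j → j ≤ p → j ≤ l →
      a j * b (p - j) ≤ a (c p) * b (p - c p) := by
    intro p hp
    obtain ⟨h1, h2, h3, hA, hB⟩ := inv p hp
    have step_up : ∀ j : ℕ, p - m ≤ j → j < c p →
        a j * b (p - j) ≤ a (j + 1) * b (p - (j + 1)) := by
      intro j hjm hjc
      have hq2 : p - j - 1 < m := by omega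
      have hsr : s (p - j - 1) ≤ r j := hA j hjc (p - j - 1) (by omega) hq2
      have hb1 : 0 < b (p - j - 1) := hbpos _ (by omega)
      have hb2 : 0 < b (p - j) := hbpos _ (by omega)
      have ha1 : 0 < a j := hapos _ (by omega)
      have ha2 : 0 < a (j + 1) := hapos _ (by omega)
      have key : b (p - j) * a j ≤ a (j + 1) * b (p - j - 1) := by
        have := hsr
        rw [hs, hr] at this
        simp only at this
        rw [div_le_div_iff₀ hb1 ha1] at this
        have hpj : p - j - 1 + 1 = p - j := by omega
        rw [hpj] at this
        linarith
      have hpj' : p - (j + 1) = p - j - 1 := by omega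
      rw [hpj']
      linarith
    have step_down : ∀ j : ℕ, c p < j → j ≤ p → j ≤ l →
        a j * b (p - j) ≤ a (j - 1) * b (p - (j - 1)) := by
      intro j hjc hjp hjl
      have hrs : r (j - 1) ≤ s (p - j) := hB (p - j) (by omega) (j - 1) (by omega) (by omega)
      have hb1 : 0 < b (p - j) := hbpos _ (by omega)
      have hb2 : 0 < b (p - j + 1) := hbpos _ (by omega)
      have ha1 : 0 < a (j - 1) := hapos _ (by omega)
      have ha2 : 0 < a j := hapos _ (by omega)
      have key : a j * b (p - j) ≤ b (p - j + 1) * a (j - 1) := by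
        have := hrs
        rw [hs, hr] at this
        simp only at this
        rw [div_le_div_iff₀ ha1 hb1] at this
        have hj1 : j - 1 + 1 = j := by omega
        rw [hj1] at this
        linarith
      have hpj' : p - (j - 1) = p - j + 1 := by omega
      rw [hpj']
      linarith
    have up : ∀ n : ℕ, ∀ j : ℕ, j + n = c p → p - m ≤ j →
        a j * b (p - j) ≤ a (c p) * b (p - c p) := by
      intro n
      induction n with
      | zero => intro j h _; rw [show j = c p by omega]
      | succ n ih =>
        intro j h hjm
        exact le_trans (step_up j hjm (by omega)) (ih (j + 1) (by omega) (by omega))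
    have down : ∀ n : ℕ, ∀ j : ℕ, j = c p + n → j ≤ p → j ≤ l →
        a j * b (p - j) ≤ a (c p) * b (p - c p) := by
      intro n
      induction n with
      | zero => intro j h _ _; rw [show j = c p by omega]
      | succ n ih =>
        intro j h hjp hjl
        exact le_trans (step_down j (by omega) hjp hjl)
          (ih (j - 1) (by omega) (by omega) (by omega))
    intro j hjm hjp hjl
    rcases le_or_gt j (c p) with h | h
    · exact up (c p - j) j (by omega) hjm
    · exact down (j - c p) j (by omega) hjp hjl
  -- value of d
  have dval : ∀ p : ℕ, p ≤ l + m → d p = a (c p) * b (p - c p) := by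
    intro p hp
    obtain ⟨h1, h2, h3, _, _⟩ := inv p hp
    rw [hd p hp]
    apply le_antisymm
    · apply Finset.sup'_le
      intro j hj
      rw [Finset.mem_Icc] at hj
      exact maxle p hp j hj.1 (le_trans hj.2 (min_le_left _ _))
        (le_trans hj.2 (min_le_right _ _))
    · have hmem : c p ∈ Finset.Icc (p - m) (min p l) := by
        rw [Finset.mem_Icc]
        exact ⟨by omega, le_min h2 h1⟩
      exact Finset.le_sup' (fun j => a j * b (p - j)) hmem
  -- the key multiset identity, by induction
  have key : ∀ n : ℕ, n ≤ l + m →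
      (Multiset.range n).map (fun p => d (p + 1) / d p)
        = (Multiset.range (c n)).map r + (Multiset.range (n - c n)).map s := by
    intro n
    induction n with
    | zero => simp [hc0]
    | succ n ih =>
      intro hn
      obtain ⟨h1, h2, h3, _, _⟩ := inv n (by omega)
      have hdn : d n = a (c n) * b (n - c n) := dval n (by omega)
      have hdn1 : d (n + 1) = a (c (n + 1)) * b (n + 1 - c (n + 1)) :=
        dval (n + 1) hn
      have hbne : b (n - c n) ≠ 0 := ne_of_gt (hbpos _ (by omega))
      have hane : a (c n) ≠ 0 := ne_of_gt (hapos _ (by omega))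
      rw [Multiset.range_succ, Multiset.map_cons, ih (by omega)]
      rw [hcsucc n] at hdn1 ⊢
      by_cases hcond : c n < l ∧ (m ≤ n - c n ∨ s (n - c n) ≤ r (c n))
      · rw [if_pos hcond] at hdn1 ⊢
        have hratio : d (n + 1) / d n = r (c n) := by
          rw [hdn1, hdn, show n + 1 - (c n + 1) = n - c n by omega, hr]
          field_simp
        rw [hratio, show n + 1 - (c n + 1) = n - c n by omega,
          Multiset.range_succ, Multiset.map_cons, Multiset.cons_add]
      · rw [if_neg hcond] at hdn1 ⊢
        have hn1 : n + 1 - c n = (n - c n) + 1 := by omega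
        have hratio : d (n + 1) / d n = s (n - c n) := by
          rw [hdn1, hdn, hn1, hs]
          field_simp
        rw [hratio, hn1, Multiset.range_succ, Multiset.map_cons,
          Multiset.add_cons]
  have hfin := key (l + m) (le_refl _)
  obtain ⟨h1, h2, h3, _, _⟩ := inv (l + m) (le_refl _)
  have hcl : c (l + m) = l := by omega
  rw [hcl, show l + m - l = m by omega] at hfin
  exact hfin
end

section
/- Let $L, M$ be natural numbers and $A \ge 1$ a real number. For all integers $q, p$ with $0 \le q \le p$ and all integers $n \ge 1$, let $a_{q,p}(n) \ge 0$ be given, and for all integers $j \ge 0$ and $n \ge 1$ let $c_j(n) \ge 0$ be given. Assume: (i) $A\, c_0(n) \ge 1$ for every $n \ge 1$; (ii) for all integers $p_0, p$ with $0 \le p_0 \le M$ and $p_0 \le p \le p_0 + L$, and all integers $m, n \ge 1$, one has $a_{p_0,p}(m+n) \le A \sum_{q=p_0}^{\min(p,M)} a_{q,p}(m)\, a_{p_0,q}(n)\, c_{p-q}(n)$. Then for all integers $p_0, p$ with $0 \le p_0 \le M$ and $p_0 \le p \le p_0 + L$, and all integers $n, r \ge 1$: $a_{p_0,p}(n r)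 \le A^r \sum \prod_{s=1}^{r} a_{p_{s-1},p_s}(n)\, c_{p-p_s}(n)$, where the sum is taken over all integer tuples $(p_1, \dots, p_r)$ satisfying $p_0 \le p_1 \le p_2 \le \cdots \le p_r \le p$ and $p_{r-1} \le M$ (with $p_{r-1}$ read as $p_0$ when $r = 1$). -/
private lemma chain_mono' {m α : ℕ} (P : Fin (m+1) → Fin α)
    (h : ∀ i : Fin m, (P i.castSucc : ℕ) ≤ (P i.succ : ℕ)) {i j : Fin (m+1)} (hij : i ≤ j) :
    (P i : ℕ) ≤ (P j : ℕ) :=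
  Fin.le_def.mp (Fin.monotone_iff_le_succ.mpr (fun i => Fin.le_def.mpr (h i)) hij)

/-- Abstract form of the key inductive inequality (Lemma 3.3): a one-step
submultiplicative-type inequality propagates along multiplicative times `n * r`
to a bound by sums over chains `p₀ ≤ p₁ ≤ ⋯ ≤ p_r ≤ p` with `p_{r-1} ≤ M`. -/
theorem chain_inequality_iterate
    (L M : ℕ) (A : ℝ) (hA : 1 ≤ A)
    (a : ℕ → ℕ → ℕ → ℝ) (c : ℕ → ℕ → ℝ)
    (ha : ∀ q p n : ℕ, q ≤ p → 1 ≤ n → 0 ≤ a q p n)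
    (hc : ∀ j n : ℕ, 1 ≤ n → 0 ≤ c j n)
    (hc0 : ∀ n : ℕ, 1 ≤ n → 1 ≤ A * c 0 n)
    (hstep : ∀ p₀ p m n : ℕ, p₀ ≤ M → p₀ ≤ p → p ≤ p₀ + L → 1 ≤ m → 1 ≤ n →
      a p₀ p (m + n) ≤
        A * ∑ q ∈ Finset.Icc p₀ (min p M), a q p m * a p₀ q n * c (p - q) n) :
    ∀ p₀ p n r : ℕ, p₀ ≤ M → p₀ ≤ p → p ≤ p₀ + L → 1 ≤ n → 1 ≤ r →
      a p₀ p (n * r) ≤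
        A ^ r *
          ∑ P ∈ Finset.univ.filter (fun P : Fin (r + 1) → Fin (p + 1) =>
              (P 0 : ℕ) = p₀ ∧
              (∀ i : Fin r, (P i.castSucc : ℕ) ≤ (P i.succ : ℕ)) ∧
              (P ⟨r - 1, by omega⟩ : ℕ) ≤ M),
            ∏ s : Fin r, a (P s.castSucc) (P s.succ) n * c (p - (P s.succ : ℕ)) n := by
  intro p₀ p n r hM hp hL hn hr
  have hA0 : (0:ℝ) ≤ A := le_trans zero_le_one hA
  induction r, hr using Nat.le_induction generalizing p₀ with
  | base =>
    -- r = 1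
    set P₁ : Fin 2 → Fin (p + 1) :=
      fun i => if i = 0 then ⟨p₀, by omega⟩ else ⟨p, by omega⟩ with hP₁
    have hmem : P₁ ∈ Finset.univ.filter (fun P : Fin (1 + 1) → Fin (p + 1) =>
        (P 0 : ℕ) = p₀ ∧
        (∀ i : Fin 1, (P i.castSucc : ℕ) ≤ (P i.succ : ℕ)) ∧
        (P ⟨1 - 1, by omega⟩ : ℕ) ≤ M) := by
      simp only [Finset.mem_filter, Finset.mem_univ, true_and, hP₁]
      refine ⟨rfl, fun i => ?_, hM⟩
      fin_cases i
      simp [hp]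
    have hsingle : a p₀ p n * c 0 n ≤
        ∑ P ∈ Finset.univ.filter (fun P : Fin (1 + 1) → Fin (p + 1) =>
            (P 0 : ℕ) = p₀ ∧
            (∀ i : Fin 1, (P i.castSucc : ℕ) ≤ (P i.succ : ℕ)) ∧
            (P ⟨1 - 1, by omega⟩ : ℕ) ≤ M),
          ∏ s : Fin 1, a (P s.castSucc) (P s.succ) n * c (p - (P s.succ : ℕ)) n := by
      have := Finset.single_le_sum (f := fun P : Fin (1+1) → Fin (p+1) =>
          ∏ s : Fin 1, a (P s.castSucc) (P s.succ) n * c (p - (P s.succ : ℕ)) n)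
        (fun P hP => by
          simp only [Finset.mem_filter, Finset.mem_univ, true_and] at hP
          refine Finset.prod_nonneg (fun s _ => mul_nonneg (ha _ _ _ (hP.2.1 s) hn) (hc _ _ hn)))
        hmem
      refine le_trans (le_of_eq ?_) this
      show _ = ∏ s : Fin 1, a (P₁ s.castSucc) (P₁ s.succ) n * c (p - (P₁ s.succ : ℕ)) n
      rw [Fin.prod_univ_one]
      have h0 : P₁ (0 : Fin 1).castSucc = ⟨p₀, by omega⟩ := rfl
      have h1 : P₁ (0 : Fin 1).succ = ⟨p, by omega⟩ := rfl
      rw [h0, h1]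
      simp
    calc a p₀ p (n * 1) = a p₀ p n * 1 := by rw [mul_one, mul_one]
      _ ≤ a p₀ p n * (A * c 0 n) :=
          mul_le_mul_of_nonneg_left (hc0 n hn) (ha _ _ _ hp hn)
      _ = A * (a p₀ p n * c 0 n) := by ring
      _ ≤ A ^ 1 * _ := by
          rw [pow_one]
          exact mul_le_mul_of_nonneg_left hsingle hA0
  | succ r hr ih =>
    -- notation for the chain sums
    have key : ∀ q ∈ Finset.Icc p₀ (min p M),
        a q p (n * r) ≤ A ^ r *
          ∑ P ∈ Finset.univ.filter (fun P : Fin (r + 1) → Fin (p + 1) =>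
              (P 0 : ℕ) = q ∧
              (∀ i : Fin r, (P i.castSucc : ℕ) ≤ (P i.succ : ℕ)) ∧
              (P ⟨r - 1, by omega⟩ : ℕ) ≤ M),
            ∏ s : Fin r, a (P s.castSucc) (P s.succ) n * c (p - (P s.succ : ℕ)) n := by
      intro q hq
      rw [Finset.mem_Icc, le_min_iff] at hq
      exact ih q hq.2.2 hq.2.1 (le_trans hL (by omega))
    -- the combinatorial identity
    have comb :
        (∑ q ∈ Finset.Icc p₀ (min p M),
          (∑ P ∈ Finset.univ.filter (fun P : Fin (r + 1) → Fin (p + 1) =>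
              (P 0 : ℕ) = q ∧
              (∀ i : Fin r, (P i.castSucc : ℕ) ≤ (P i.succ : ℕ)) ∧
              (P ⟨r - 1, by omega⟩ : ℕ) ≤ M),
            ∏ s : Fin r, a (P s.castSucc) (P s.succ) n * c (p - (P s.succ : ℕ)) n)
            * (a p₀ q n * c (p - q) n))
        = ∑ P ∈ Finset.univ.filter (fun P : Fin (r + 1 + 1) → Fin (p + 1) =>
              (P 0 : ℕ) = p₀ ∧
              (∀ i : Fin (r+1), (P i.castSucc : ℕ) ≤ (P i.succ : ℕ)) ∧
              (P ⟨r + 1 - 1, by omega⟩ : ℕ) ≤ M),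
            ∏ s : Fin (r+1), a (P s.castSucc) (P s.succ) n * c (p - (P s.succ : ℕ)) n := by
      simp only [Finset.sum_mul]
      rw [Finset.sum_sigma']
      refine Finset.sum_nbij'
        (fun x => Fin.cons ⟨p₀, by omega⟩ x.2)
        (fun P => ⟨(P 1 : ℕ), Fin.tail P⟩) ?_ ?_ ?_ ?_ ?_
      · rintro ⟨q, Q⟩ hx
        simp only [Finset.mem_sigma, Finset.mem_Icc, Finset.mem_filter, Finset.mem_univ,
          true_and, le_min_iff] at hx
        obtain ⟨⟨hq1, hq2, hq3⟩, hQ0, hQmono, hQM⟩ := hx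
        simp only [Finset.mem_filter, Finset.mem_univ, true_and]
        refine ⟨by simp, fun i => ?_, ?_⟩
        · refine Fin.cases ?_ (fun j => ?_) i
          · simpa [Fin.cons_zero, Fin.succ_zero_eq_one'] using hQ0 ▸ hq1
          · rw [← Fin.succ_castSucc, Fin.cons_succ, Fin.cons_succ]
            exact hQmono j
        · have : (⟨r + 1 - 1, by omega⟩ : Fin (r + 1 + 1)) =
              (⟨r - 1, by omega⟩ : Fin (r + 1)).succ := by
            apply Fin.ext; simp; omega
          rw [this, Fin.cons_succ]
          exact hQM
      · intro P hP
        simp only [Finset.mem_filter, Finset.mem_univ, true_and] at hP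
        obtain ⟨hP0, hPmono, hPM⟩ := hP
        have hmono : ∀ i j : Fin (r+1+1), i ≤ j → (P i : ℕ) ≤ (P j : ℕ) :=
          fun i j hij => chain_mono' P hPmono hij
        simp only [Finset.mem_sigma, Finset.mem_Icc, Finset.mem_filter, Finset.mem_univ,
          true_and, le_min_iff]
        have h1r : (1 : Fin (r+1+1)) ≤ ⟨r + 1 - 1, by omega⟩ := by
          rw [Fin.le_def]; simp [Fin.val_one]; omega
        refine ⟨⟨?_, Fin.is_le _, le_trans (hmono _ _ h1r) hPM⟩, ?_, fun i => ?_, ?_⟩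
        · have h01 : (0 : Fin (r+1+1)) ≤ 1 := by simp [Fin.le_def]
          exact hP0 ▸ hmono _ _ h01
        · show (P (0 : Fin (r+1)).succ : ℕ) = (P 1 : ℕ)
          congr 1
        · show (P i.castSucc.succ : ℕ) ≤ (P i.succ.succ : ℕ)
          rw [Fin.succ_castSucc]
          exact hPmono i.succ
        · show (P (⟨r - 1, by omega⟩ : Fin (r+1)).succ : ℕ) ≤ M
          have : (⟨r - 1, by omega⟩ : Fin (r+1)).succ = (⟨r + 1 - 1, by omega⟩ : Fin (r+1+1)) := by
            apply Fin.ext; simp; omega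
          rw [this]; exact hPM
      · rintro ⟨q, Q⟩ hx
        simp only [Finset.mem_sigma, Finset.mem_Icc, Finset.mem_filter, Finset.mem_univ,
          true_and] at hx
        have : ((Fin.cons ⟨p₀, by omega⟩ Q : Fin (r+1+1) → Fin (p+1)) 1 : ℕ) = q := by
          have h1 : (1 : Fin (r+1+1)) = (0 : Fin (r+1)).succ := by
            apply Fin.ext; simp [Fin.val_one]
          rw [h1, Fin.cons_succ]
          exact hx.2.1
        beta_reduce
        rw [Fin.tail_cons]
        exact congrArg (fun t => (⟨t, Q⟩ : Σ _ : ℕ, Fin (r+1) → Fin (p+1))) this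
      · intro P hP
        simp only [Finset.mem_filter, Finset.mem_univ, true_and] at hP
        have h0 : (⟨p₀, by omega⟩ : Fin (p+1)) = P 0 := by apply Fin.ext; simp [hP.1]
        beta_reduce
        rw [h0]
        exact Fin.cons_self_tail P
      · rintro ⟨q, Q⟩ hx
        simp only [Finset.mem_sigma, Finset.mem_Icc, Finset.mem_filter, Finset.mem_univ,
          true_and] at hx
        beta_reduce
        rw [Fin.prod_univ_succ]
        simp only [Fin.castSucc_zero, Fin.cons_zero, ← Fin.succ_castSucc, Fin.cons_succ]
        rw [hx.2.1]
        ring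
    -- put everything together
    have h1 : a p₀ p (n * (r + 1)) ≤
        A * ∑ q ∈ Finset.Icc p₀ (min p M), a q p (n * r) * a p₀ q n * c (p - q) n := by
      rw [Nat.mul_succ]
      exact hstep p₀ p (n * r) n hM hp hL (Nat.mul_pos hn hr) hn
    refine le_trans h1 ?_
    have h2 : ∑ q ∈ Finset.Icc p₀ (min p M), a q p (n * r) * a p₀ q n * c (p - q) n ≤
        A ^ r * ∑ q ∈ Finset.Icc p₀ (min p M),
          (∑ P ∈ Finset.univ.filter (fun P : Fin (r + 1) → Fin (p + 1) =>
              (P 0 : ℕ) = q ∧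
              (∀ i : Fin r, (P i.castSucc : ℕ) ≤ (P i.succ : ℕ)) ∧
              (P ⟨r - 1, by omega⟩ : ℕ) ≤ M),
            ∏ s : Fin r, a (P s.castSucc) (P s.succ) n * c (p - (P s.succ : ℕ)) n)
            * (a p₀ q n * c (p - q) n) := by
      rw [Finset.mul_sum]
      refine Finset.sum_le_sum (fun q hq => ?_)
      have hq' := hq
      rw [Finset.mem_Icc, le_min_iff] at hq'
      calc a q p (n * r) * a p₀ q n * c (p - q) n
          = a q p (n * r) * (a p₀ q n * c (p - q) n) := by ring
        _ ≤ (A ^ r * _) * (a p₀ q n * c (p - q) n) :=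
            mul_le_mul_of_nonneg_right (key q hq)
              (mul_nonneg (ha _ _ _ hq'.1 hn) (hc _ _ hn))
        _ = A ^ r * (_ * (a p₀ q n * c (p - q) n)) := by ring
    refine le_trans (mul_le_mul_of_nonneg_left h2 hA0) (le_of_eq ?_)
    rw [comb]
    ring
end
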